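/- Let R be a commutative ring, M an R-module, S a multiplicatively closed subset of R, and ψ : M → M_S the canonical map to the localization. If N is a 𝔭-primary submodule of M with 𝔭 ∩ S = ∅, then the R_S-submodule N_S of M_S generated by ψ(N) is (R_S·𝔭)-primary in M_S (where R_S·𝔭 is the extension of 𝔭 to R_S), and ψ⁻¹(N_S) = N. -/

import Mathlib

section Defs

variable (A L : Type*) [CommRing A] [AddCommGroup L] [Module A L]

/-- `a ∈ A` is a zero divisor for the module `L`:
`a • y = 0` for some `y ≠ 0` in `L`. -/
def IsZeroDivisorFor (a : A) : Prop := ∃ y : L, y ≠ 0 ∧ a • y = 0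

/-- `a ∈ A` is nilpotent for the module `L`: for every `y ∈ L` there is `n`
with `a ^ n • y = 0`. -/
def IsNilpotentFor (a : A) : Prop := ∀ y : L, ∃ n : ℕ, a ^ n • y = 0

/-- `L` is `q`-coprimary: `L ≠ 0`, every zero divisor for `L` lies in `q`,
and every element of `q` is nilpotent for `L`. -/
def IsCoprimaryFor (q : Ideal A) : Prop :=
  (∃ y : L, y ≠ 0) ∧ (∀ a : A, IsZeroDivisorFor A L a → a ∈ q) ∧
    ∀ a ∈ q, IsNilpotentFor A L a

/-- A submodule `N` of `L` is `q`-primary in `L` iff `L ⧸ N` is `q`-coprimary. -/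
def IsPrimaryIn (N : Submodule A L) (q : Ideal A) : Prop :=
  IsCoprimaryFor A (L ⧸ N) q

/-- The `S`-component of `N` in `L`: `{x ∈ L | ∃ s ∈ S, s • x ∈ N}`,
for an arbitrary subset `S ⊆ A`. -/
def sComp (S : Set A) (N : Submodule A L) : Set L := {x : L | ∃ s ∈ S, s • x ∈ N}

/-- A prime ideal `p` is Krull-associated to `L` iff for every multiplicatively
closed subset `T ⊋ A ∖ p` one has `T^L((0)) ⊋ (A ∖ p)^L((0))`. -/
def KrullAssociated (p : Ideal A) : Prop :=
  ∀ T : Submonoid A, ((p : Set A)ᶜ ⊂ (T : Set A)) →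
    sComp A L ((p : Set A)ᶜ) ⊥ ⊂ sComp A L (T : Set A) ⊥

end Defs

/-- If `N` is `𝔭`-primary in `M` with `𝔭 ∩ S = ∅`, then the
`R_S`-submodule `N_S` of `M_S` generated by `ψ(N)` is `(R_S·𝔭)`-primary in
`M_S`, and `ψ⁻¹(N_S) = N`. -/
theorem statement2 {R M : Type*} [CommRing R] [AddCommGroup M] [Module R M]
    (S : Submonoid R) (𝔭 : Ideal R) [𝔭.IsPrime]
    (N : Submodule R M) (hN : IsPrimaryIn R M N 𝔭)
    (hdisj : (𝔭 : Set R) ∩ (S : Set R) = ∅) :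
    IsPrimaryIn (Localization S) (LocalizedModule S M)
        (Submodule.span (Localization S)
          ((LocalizedModule.mkLinearMap S M) '' (N : Set M)))
        (𝔭.map (algebraMap R (Localization S))) ∧
      ((Submodule.span (Localization S)
          ((LocalizedModule.mkLinearMap S M) '' (N : Set M))).restrictScalars R).comap
        (LocalizedModule.mkLinearMap S M) = N := by
  classical
  -- The span of the image of `N` is the localization of `N`.
  have hspan : Submodule.span (Localization S)
      ((LocalizedModule.mkLinearMap S M) '' (N : Set M)) = N.localized S := by
    have h := Submodule.localized'_span (Localization S) S
      (LocalizedModule.mkLinearMap S M) (N : Set M)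
    rw [Submodule.span_eq] at h
    exact h.symm
  rw [hspan]
  -- Elements of `S` are not in `𝔭`.
  have hSnotp : ∀ s : S, (s : R) ∉ 𝔭 := by
    intro s hs
    have : (s : R) ∈ (𝔭 : Set R) ∩ (S : Set R) := ⟨hs, s.2⟩
    rw [hdisj] at this
    exact this
  obtain ⟨⟨y₀, hy₀⟩, hzd, hnil⟩ := hN
  -- Elements of `S` act injectively on `M ⧸ N`.
  have hSreg : ∀ (s : S) (y : M ⧸ N), (s : R) • y = 0 → y = 0 := by
    intro s y hy
    by_contra hy'
    exact hSnotp s (hzd _ ⟨y, hy', hy⟩)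
  set g : (M ⧸ N) →ₗ[R] (LocalizedModule S M ⧸ N.localized S) := N.toLocalizedQuotient S
    with hgdef
  haveI hloc : IsLocalizedModule S g := by
    rw [hgdef]; infer_instance
  -- `mk'` vanishing
  have hmk0 : ∀ (y : M ⧸ N) (t : S), IsLocalizedModule.mk' g y t = 0 → y = 0 := by
    intro y t hy
    rw [IsLocalizedModule.mk'_eq_zero' (S := S)] at hy
    obtain ⟨s, hs⟩ := hy
    exact hSreg s y hs
  -- `g` is injective.
  have hginj : ∀ y : M ⧸ N, g y = 0 → y = 0 := by
    intro y hy
    refine hmk0 y 1 ?_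
    rw [IsLocalizedModule.mk'_one (S := S)]
    exact hy
  constructor
  · refine ⟨⟨g y₀, fun h => hy₀ (hginj y₀ h)⟩, ?_, ?_⟩
    · -- zero divisors lie in `𝔭.map`
      rintro a ⟨z, hz, haz⟩
      obtain ⟨⟨r, s⟩, rfl⟩ := IsLocalization.mk'_surjective S a
      obtain ⟨⟨y, t⟩, rfl⟩ := IsLocalizedModule.mk'_surjective S g z
      simp only [Function.uncurry_apply_pair] at hz haz
      rw [IsLocalizedModule.mk'_smul_mk' (Localization S)] at haz
      have hy : y ≠ 0 := by
        intro h
        rw [h, IsLocalizedModule.mk'_zero] at hz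
        exact hz rfl
      have hr : r ∈ 𝔭 := hzd r ⟨y, hy, hmk0 _ _ haz⟩
      dsimp only
      rw [IsLocalization.mk'_eq_mul_mk'_one]
      exact Ideal.mul_mem_right _ _ (Ideal.mem_map_of_mem _ hr)
    · -- elements of `𝔭.map` are nilpotent
      intro a ha z
      obtain ⟨⟨⟨p, hp⟩, s⟩, hps⟩ := (IsLocalization.mem_map_algebraMap_iff S _).mp ha
      simp only at hps
      obtain ⟨⟨y, t⟩, rfl⟩ := IsLocalizedModule.mk'_surjective S g z
      simp only [Function.uncurry_apply_pair]
      obtain ⟨n, hn⟩ := hnil p hp y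
      refine ⟨n, ?_⟩
      have hpow : a ^ n = IsLocalization.mk' (Localization S) (p ^ n) (s ^ n) := by
        rw [IsLocalization.eq_mk'_iff_mul_eq, SubmonoidClass.coe_pow, map_pow, map_pow,
          ← mul_pow, hps]
      rw [hpow, IsLocalizedModule.mk'_smul_mk' (Localization S), hn,
        IsLocalizedModule.mk'_zero]
  · -- the contraction of `N_S` is `N`
    ext x
    simp only [Submodule.mem_comap, Submodule.restrictScalars_mem]
    constructor
    · intro hx
      have h0 : (Submodule.Quotient.mk ((LocalizedModule.mkLinearMap S M) x) :
          LocalizedModule S M ⧸ N.localized S) = 0 :=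
        (Submodule.Quotient.mk_eq_zero _).mpr hx
      have hgx : g (Submodule.Quotient.mk x) = 0 := by
        rw [hgdef, Submodule.toLocalizedQuotient'_mk]
        exact h0
      exact (Submodule.Quotient.mk_eq_zero _).mp (hginj _ hgx)
    · intro hx
      exact ⟨x, hx, 1, by rw [IsLocalizedModule.mk'_one]⟩
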